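/- arXiv:2506.24032 — 3 statements merged into one kernel-verified Lean document; each statement's English description precedes it below -/
import Mathlib

section
/- Let G = (V, E) be a graph and construct the bipartite graph B with vertex set X ∪ Y ∪ {z}, where X = {vᵢ : uᵢ ∈ V}, Y = {vᵢ' : uᵢ ∈ V}, edges {vᵢ, vᵢ'} for all i, edges {vᵢ, vⱼ'} and {vᵢ', vⱼ} for each edge {uᵢ, uⱼ} ∈ E, and edges {z, vᵢ'} for all i. Then if W ⊆ V is a dominating set of G, the set {vᵢ' : uᵢ ∈ W} ∪ {z} is a dominating set of B. -/
/-- The relation generating the bipartite graph `B` built from `G`: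
vertices `Sum.inl i` are the `vᵢ` (class `X`), vertices `Sum.inr (Sum.inl i)` are the `vᵢ'`
(class `Y`), and `Sum.inr (Sum.inr ())` is the apex `z`. -/
def bipRel {V : Type*} (G : SimpleGraph V) : (V ⊕ V ⊕ Unit) → (V ⊕ V ⊕ Unit) → Prop
  | Sum.inl i, Sum.inr (Sum.inl j) => i = j ∨ G.Adj i j
  | Sum.inr (Sum.inr _), Sum.inr (Sum.inl _) => True
  | _, _ => False

/-- The bipartite graph `B` built from `G`. -/
def bipGraph {V : Type*} (G : SimpleGraph V) : SimpleGraph (V ⊕ V ⊕ Unit) :=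
  SimpleGraph.fromRel (bipRel G)

theorem stmt8 {V : Type*} (G : SimpleGraph V) (W : Set V)
    (hW : ∀ v ∉ W, ∃ u ∈ W, G.Adj u v) :
    ∀ x ∉ ((fun i => (Sum.inr (Sum.inl i) : V ⊕ V ⊕ Unit)) '' W ∪
            {Sum.inr (Sum.inr ())}),
      ∃ y ∈ ((fun i => (Sum.inr (Sum.inl i) : V ⊕ V ⊕ Unit)) '' W ∪
            {Sum.inr (Sum.inr ())}),
        (bipGraph G).Adj y x := by
  intro x hx
  match x with
  | Sum.inl i =>
    by_cases hi : i ∈ W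
    · exact ⟨Sum.inr (Sum.inl i), Or.inl ⟨i, hi, rfl⟩,
        ⟨by simp, Or.inr (Or.inl rfl)⟩⟩
    · obtain ⟨u, hu, hadj⟩ := hW i hi
      exact ⟨Sum.inr (Sum.inl u), Or.inl ⟨u, hu, rfl⟩,
        ⟨by simp, Or.inr (Or.inr hadj.symm)⟩⟩
  | Sum.inr (Sum.inl i) =>
    exact ⟨Sum.inr (Sum.inr ()), Or.inr rfl, ⟨by simp, Or.inl trivial⟩⟩
  | Sum.inr (Sum.inr ()) =>
    exact absurd (Or.inr rfl) hx
end

section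
/- In the bipartite construction B from a graph G (duplicated vertex classes X, Y plus an apex z adjacent to all of Y), if Ŵ is a dominating set of B, then the set W = {uᵢ : vᵢ ∈ Ŵ or vᵢ' ∈ Ŵ} is a dominating set of G. -/
theorem stmt9 {V : Type*} (G : SimpleGraph V) (What : Set (V ⊕ V ⊕ Unit))
    (h : ∀ x ∉ What, ∃ y ∈ What, (bipGraph G).Adj y x) :
    ∀ u ∉ {i : V | Sum.inl i ∈ What ∨ Sum.inr (Sum.inl i) ∈ What},
      ∃ v ∈ {i : V | Sum.inl i ∈ What ∨ Sum.inr (Sum.inl i) ∈ What}, G.Adj v u := by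
  intro u hu
  simp only [Set.mem_setOf_eq, not_or] at hu
  obtain ⟨hu1, hu2⟩ := hu
  obtain ⟨y, hy, hadj⟩ := h (Sum.inl u) hu1
  rw [bipGraph, SimpleGraph.fromRel_adj] at hadj
  obtain ⟨hne, hrel⟩ := hadj
  rcases hrel with hrel | hrel
  · rcases y with i | j | t <;> simp [bipRel] at hrel
  · rcases y with i | j | t
    · simp [bipRel] at hrel
    · rcases hrel with rfl | hadj
      · exact absurd hy hu2
      · exact ⟨j, Or.inr hy, hadj.symm⟩
    · simp [bipRel] at hrel
end

section
/- Knapsack reduces to dominating set knapsack on stars: given items 1,…,n with sizes θᵢ and values pᵢ, capacity b and target q, form the star graph with center v₀ (weight 0, profit 0) and leaves vᵢ (weight θᵢ, profit pᵢ). Then there exists I ⊆ {1,…,n} with Σ_{i∈I} θᵢ ≤ b and Σ_{i∈I} pᵢ ≥ q if and only if there exists a dominating set U of the star with Σ_{v∈U} w(v) ≤ b and Σ_{v∈U} α(v) ≥ q. -/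
lemma sum_cases_aux {n : ℕ} (f : Fin n → ℕ) (U : Finset (Fin (n+1))) :
    ∑ v ∈ U, Fin.cases (motive := fun _ => ℕ) 0 f v =
      ∑ i ∈ Finset.univ.filter (fun i : Fin n => i.succ ∈ U), f i := by
  rw [← Finset.sum_erase U (a := 0) (by simp)]
  have himg : (Finset.univ.filter (fun i : Fin n => i.succ ∈ U)).image Fin.succ
      = U.erase 0 := by
    ext v
    simp only [Finset.mem_image, Finset.mem_filter, Finset.mem_univ, true_and,
      Finset.mem_erase]
    constructor
    · rintro ⟨i, hi, rfl⟩; exact ⟨Fin.succ_ne_zero i, hi⟩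
    · rintro ⟨h0, hU⟩
      exact ⟨v.pred h0, by rwa [Fin.succ_pred], Fin.succ_pred v h0⟩
  rw [← himg, Finset.sum_image (fun a _ b _ h => Fin.succ_injective n h)]
  simp

theorem stmt11 (n : ℕ) (θ p : Fin n → ℕ) (b q : ℕ) :
    (∃ I : Finset (Fin n), ∑ i ∈ I, θ i ≤ b ∧ q ≤ ∑ i ∈ I, p i) ↔
    (∃ U : Finset (Fin (n+1)),
      (∀ v ∉ U, ∃ u ∈ U,
        (SimpleGraph.fromRel (fun a (_ : Fin (n+1)) => a = 0)).Adj u v) ∧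
      ∑ v ∈ U, Fin.cases (motive := fun _ => ℕ) 0 θ v ≤ b ∧
      q ≤ ∑ v ∈ U, Fin.cases (motive := fun _ => ℕ) 0 p v) := by
  constructor
  · rintro ⟨I, h1, h2⟩
    refine ⟨insert 0 (I.image Fin.succ), ?_, ?_, ?_⟩
    · intro v hv
      refine ⟨0, by simp, ?_⟩
      simp only [SimpleGraph.fromRel_adj]
      exact ⟨fun h => hv (by simp [← h]), Or.inl trivial⟩
    all_goals
      rw [sum_cases_aux]
      have : Finset.univ.filter
          (fun i : Fin n => i.succ ∈ insert 0 (I.image Fin.succ)) = I := by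
        ext i; simp [Fin.succ_ne_zero, Fin.succ_inj]
      rw [this]
    · exact h1
    · exact h2
  · rintro ⟨U, _, h1, h2⟩
    exact ⟨Finset.univ.filter (fun i : Fin n => i.succ ∈ U),
      by rw [← sum_cases_aux]; exact h1, by rw [← sum_cases_aux]; exact h2⟩
end
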